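/- If the null vector field ℓ = ∂/∂v of the Kundt metric is a Killing vector field, then it is covariantly constant: under the hypotheses ∂H/∂v = 0 and ∂W_i/∂v = 0 identically for all i = 2,…,n−1, the one-form ℓ♭ (components ℓ_u = 1, others zero) satisfies ∇_a ℓ_b = 0 for all a,b. Thus the most general metric admitting a covariantly constant null vector is the Kundt metric with H = H(u,x^k) and W_i = W_i(u,x^k). -/

import Mathlib

open Matrix

/-- Points of the Kundt spacetime `ℝⁿ` with `n = m + 2`, written as coordinates
`(v, u, x)` with transverse coordinates `x = (x²,…,x^{n-1}) ∈ ℝ^m`. -/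
abbrev KPt (m : ℕ) := ℝ × ℝ × (Fin m → ℝ)

/-- Coordinate indices for the Kundt metric: `Sum.inl 0` is the `v`-index, `Sum.inl 1` is the
`u`-index, and `Sum.inr k` are the transverse indices. -/
abbrev KIdx (m : ℕ) := Fin 2 ⊕ Fin m

/-- The Kundt metric `ds² = 2du(dv + H du + W_i dx^i) + g_ij dx^i dx^j`, as a symmetric
matrix-valued function on `ℝⁿ`: components `g_vv = 0`, `g_vu = g_uv = 1`, `g_vi = 0`,
`g_uu = 2H`, `g_ui = W_i`, and transverse block `g_ij(u,x)`. -/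
noncomputable def kundt {m : ℕ} (H : KPt m → ℝ) (W : Fin m → KPt m → ℝ)
    (gT : ℝ → (Fin m → ℝ) → Matrix (Fin m) (Fin m) ℝ) (p : KPt m) :
    Matrix (KIdx m) (KIdx m) ℝ :=
  Matrix.of fun a b =>
    match a, b with
    | Sum.inl i, Sum.inl j =>
        if i = 0 then (if j = 0 then 0 else 1)
        else (if j = 0 then 1 else 2 * H p)
    | Sum.inl i, Sum.inr _k => if i = 0 then 0 else W _k p
    | Sum.inr _k, Sum.inl i => if i = 0 then 0 else W _k p
    | Sum.inr k, Sum.inr l => gT p.2.1 p.2.2 k l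

/-- The Minkowski matrix `diag(-1,1,…,1)` on the Kundt index set. -/
noncomputable def kMink (m : ℕ) : Matrix (KIdx m) (KIdx m) ℝ :=
  Matrix.diagonal (fun a => if a = Sum.inl 0 then (-1 : ℝ) else 1)

/-- The coordinate basis vectors of `ℝⁿ = ℝ × ℝ × ℝ^м`: `∂/∂v`, `∂/∂u` and `∂/∂x^k`. -/
noncomputable def kBasis {m : ℕ} : KIdx m → KPt m
  | Sum.inl i => if i = 0 then ((1 : ℝ), (0 : ℝ), (0 : Fin m → ℝ)) else (0, 1, 0)
  | Sum.inr k => (0, 0, Pi.single k 1)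

/-- The coordinate partial derivative `∂_a f` of a scalar function on `ℝⁿ`. -/
noncomputable def kPDeriv {m : ℕ} (a : KIdx m) (f : KPt m → ℝ) (p : KPt m) : ℝ :=
  fderiv ℝ f p (kBasis a)

/-- The Levi-Civita connection coefficients
`Γ^d_ab = (1/2) g^{dc} (∂_a g_cb + ∂_b g_ca - ∂_c g_ab)` of the Kundt metric. -/
noncomputable def kChristoffel {m : ℕ} (H : KPt m → ℝ) (W : Fin m → KPt m → ℝ)
    (gT : ℝ → (Fin m → ℝ) → Matrix (Fin m) (Fin m) ℝ) (d a b : KIdx m) (p : KPt m) : ℝ :=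
  (1 / 2) * ∑ c : KIdx m, (kundt H W gT p)⁻¹ d c *
    (kPDeriv a (fun q => kundt H W gT q c b) p + kPDeriv b (fun q => kundt H W gT q c a) p
      - kPDeriv c (fun q => kundt H W gT q a b) p)

/-- The one-form `ℓ♭` with components `ℓ_a = g_av`, i.e. `ℓ_u = 1` and all other components
zero. -/
noncomputable def lFlat {m : ℕ} : KIdx m → ℝ := fun a => if a = Sum.inl 1 then 1 else 0

/-- The covariant derivative `∇_a ℓ_b = ∂_a ℓ_b - Γ^c_ab ℓ_c` of the constant one-form `ℓ♭`
with respect to the Levi-Civita connection of the Kundt metric. -/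
noncomputable def kCovDl {m : ℕ} (H : KPt m → ℝ) (W : Fin m → KPt m → ℝ)
    (gT : ℝ → (Fin m → ℝ) → Matrix (Fin m) (Fin m) ℝ) (a b : KIdx m) (p : KPt m) : ℝ :=
  kPDeriv a (fun _ => lFlat b) p - ∑ c : KIdx m, kChristoffel H W gT c a b p * lFlat c

/-- The null coordinate vector field `ℓ = ∂/∂v`, as a vector of components. -/
noncomputable def lVec {m : ℕ} : KIdx m → ℝ := fun a => if a = Sum.inl 0 then 1 else 0


/-- Explicit inverse of the Kundt metric. -/
noncomputable def kInv {m : ℕ} (H : KPt m → ℝ) (W : Fin m → KPt m → ℝ)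
    (gT : ℝ → (Fin m → ℝ) → Matrix (Fin m) (Fin m) ℝ) (p : KPt m) :
    Matrix (KIdx m) (KIdx m) ℝ :=
  Matrix.of fun a b =>
    match a, b with
    | Sum.inl i, Sum.inl j =>
        if i = 0 then
          (if j = 0 then -(2 * H p) + ∑ k, ∑ l, W k p * W l p * (gT p.2.1 p.2.2)⁻¹ k l else 1)
        else (if j = 0 then 1 else 0)
    | Sum.inl i, Sum.inr k => if i = 0 then -∑ l, (gT p.2.1 p.2.2)⁻¹ k l * W l p else 0
    | Sum.inr k, Sum.inl i => if i = 0 then -∑ l, (gT p.2.1 p.2.2)⁻¹ k l * W l p else 0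
    | Sum.inr k, Sum.inr l => (gT p.2.1 p.2.2)⁻¹ k l

lemma kundt_mul_kInv {m : ℕ} (H : KPt m → ℝ) (W : Fin m → KPt m → ℝ)
    (gT : ℝ → (Fin m → ℝ) → Matrix (Fin m) (Fin m) ℝ)
    (hsym : ∀ u x, (gT u x).IsSymm) (hpos : ∀ u x, (gT u x).PosDef) (p : KPt m) :
    kundt H W gT p * kInv H W gT p = 1 := by
  have hd : IsUnit (gT p.2.1 p.2.2).det := isUnit_iff_ne_zero.mpr (ne_of_gt (hpos _ _).det_pos)
  have hS1 : gT p.2.1 p.2.2 * (gT p.2.1 p.2.2)⁻¹ = 1 := Matrix.mul_nonsing_inv _ hd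
  have hsi : ((gT p.2.1 p.2.2)⁻¹).IsSymm := by
    unfold Matrix.IsSymm
    rw [Matrix.transpose_nonsing_inv, (hsym _ _).eq]
  have hsyi : ∀ k l, (gT p.2.1 p.2.2)⁻¹ k l = (gT p.2.1 p.2.2)⁻¹ l k := by
    intro k l
    conv_lhs => rw [← hsi]
    rw [Matrix.transpose_apply]
  have h2 : ∀ k l, (∑ j, gT p.2.1 p.2.2 k j * (gT p.2.1 p.2.2)⁻¹ j l)
      = if k = l then (1 : ℝ) else 0 := by
    intro k l
    rw [← Matrix.mul_apply, hS1, Matrix.one_apply]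
  ext a b
  rw [Matrix.mul_apply, Fintype.sum_sum_type, Fin.sum_univ_two]
  rcases a with i | k <;> rcases b with j | l
  · fin_cases i <;> fin_cases j <;> simp [kundt, kInv, Matrix.one_apply]
    rw [add_neg_eq_zero, Finset.sum_comm]
    refine Finset.sum_congr rfl fun x _ => ?_
    rw [Finset.mul_sum]
    exact Finset.sum_congr rfl fun y _ => by rw [hsyi y x]; ring
  · fin_cases i <;> simp [kundt, kInv, Matrix.one_apply]
    have : (∑ j, (gT p.2.1 p.2.2)⁻¹ l j * W j p) = ∑ x, W x p * (gT p.2.1 p.2.2)⁻¹ x l :=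
      Finset.sum_congr rfl fun j _ => by rw [hsyi l j]; ring
    rw [this]; ring
  · fin_cases j <;> simp [kundt, kInv, Matrix.one_apply, Finset.mul_sum]
    have h3 : ∀ y, (∑ x, gT p.2.1 p.2.2 k x * ((gT p.2.1 p.2.2)⁻¹ x y * W y p))
        = (if k = y then (1:ℝ) else 0) * W y p := by
      intro y
      rw [← h2 k y, Finset.sum_mul]
      exact Finset.sum_congr rfl fun x _ => by ring
    rw [Finset.sum_comm]
    simp only [h3, ite_mul, one_mul, zero_mul]
    simp [Finset.sum_ite_eq]
  · simp [kundt, kInv, Matrix.one_apply, h2 k l]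


lemma kInv_eq {m : ℕ} (H : KPt m → ℝ) (W : Fin m → KPt m → ℝ)
    (gT : ℝ → (Fin m → ℝ) → Matrix (Fin m) (Fin m) ℝ)
    (hsym : ∀ u x, (gT u x).IsSymm) (hpos : ∀ u x, (gT u x).PosDef) (p : KPt m) :
    (kundt H W gT p)⁻¹ = kInv H W gT p :=
  Matrix.inv_eq_right_inv (kundt_mul_kInv H W gT hsym hpos p)

/-- The row of the metric with first index `v` is constant, so coordinate derivatives of
`g_{vb}` vanish. -/
lemma kPDeriv_row_v {m : ℕ} (H : KPt m → ℝ) (W : Fin m → KPt m → ℝ)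
    (gT : ℝ → (Fin m → ℝ) → Matrix (Fin m) (Fin m) ℝ) (a b : KIdx m) (p : KPt m) :
    kPDeriv a (fun q => kundt H W gT q (Sum.inl 0) b) p = 0 := by
  have h : (fun q => kundt H W gT q (Sum.inl 0) b) =
      fun _ : KPt m => kundt H W gT p (Sum.inl 0) b := by
    funext q
    rcases b with j | l <;> simp [kundt]
  rw [h]
  simp [kPDeriv]

/-- The `v`-derivative of the metric vanishes under the Killing hypotheses. -/
lemma kPDeriv_v_metric {m : ℕ} (H : KPt m → ℝ) (W : Fin m → KPt m → ℝ)
    (gT : ℝ → (Fin m → ℝ) → Matrix (Fin m) (Fin m) ℝ)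
    (hH : ContDiff ℝ (⊤ : ℕ∞) H)
    (hgT : ∀ k l, ContDiff ℝ (⊤ : ℕ∞) (fun q : ℝ × (Fin m → ℝ) => gT q.1 q.2 k l))
    (hHv : ∀ p : KPt m, kPDeriv (Sum.inl 0) H p = 0)
    (hWv : ∀ (k : Fin m) (p : KPt m), kPDeriv (Sum.inl 0) (W k) p = 0)
    (a b : KIdx m) (p : KPt m) :
    kPDeriv (Sum.inl 0) (fun q => kundt H W gT q a b) p = 0 := by
  have hWf : ∀ k : Fin m, (fun q => kundt H W gT q (Sum.inl 1) (Sum.inr k)) = W k := by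
    intro k; funext q; simp [kundt]
  rcases a with i | k <;> rcases b with j | l
  · fin_cases i <;> fin_cases j
    · exact kPDeriv_row_v H W gT _ _ p
    · exact kPDeriv_row_v H W gT _ _ p
    · show kPDeriv (Sum.inl 0) (fun q => kundt H W gT q (Sum.inl 1) (Sum.inl 0)) p = 0
      have h : (fun q => kundt H W gT q (Sum.inl 1) (Sum.inl 0)) = fun _ : KPt m => (1 : ℝ) := by
        funext q; simp [kundt]
      rw [h]; simp [kPDeriv]
    · show kPDeriv (Sum.inl 0) (fun q => kundt H W gT q (Sum.inl 1) (Sum.inl 1)) p = 0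
      have h : (fun q => kundt H W gT q (Sum.inl 1) (Sum.inl 1)) = fun q => 2 * H q := by
        funext q; simp [kundt]
      rw [h]
      unfold kPDeriv
      rw [fderiv_const_mul ((hH.differentiable (by simp)).differentiableAt)]
      have := hHv p
      unfold kPDeriv at this
      simp [this]
  · fin_cases i
    · exact kPDeriv_row_v H W gT _ _ p
    · show kPDeriv (Sum.inl 0) (fun q => kundt H W gT q (Sum.inl 1) (Sum.inr l)) p = 0
      rw [hWf l]; exact hWv l p
  · fin_cases j
    · show kPDeriv (Sum.inl 0) (fun q => kundt H W gT q (Sum.inr k) (Sum.inl 0)) p = 0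
      have h : (fun q => kundt H W gT q (Sum.inr k) (Sum.inl 0)) = fun _ : KPt m => (0 : ℝ) := by
        funext q; simp [kundt]
      rw [h]; simp [kPDeriv]
    · show kPDeriv (Sum.inl 0) (fun q => kundt H W gT q (Sum.inr k) (Sum.inl 1)) p = 0
      have h : (fun q => kundt H W gT q (Sum.inr k) (Sum.inl 1)) = W k := by
        funext q; simp [kundt]
      rw [h]; exact hWv k p
  · have h : (fun q => kundt H W gT q (Sum.inr k) (Sum.inr l)) =
        (fun r : ℝ × (Fin m → ℝ) => gT r.1 r.2 k l) ∘ Prod.snd := by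
      funext q; simp [kundt]
    rw [h]
    unfold kPDeriv
    have hg : HasFDerivAt (fun r : ℝ × (Fin m → ℝ) => gT r.1 r.2 k l)
        (fderiv ℝ (fun r : ℝ × (Fin m → ℝ) => gT r.1 r.2 k l) p.2) p.2 :=
      (((hgT k l).differentiable (by simp)) p.2).hasFDerivAt
    have hc := hg.comp p (hasFDerivAt_snd (𝕜 := ℝ) (p := p))
    rw [hc.fderiv]
    have hz : (kBasis (m := m) (Sum.inl 0)).2 = 0 := by
      simp [kBasis]
    simp [ContinuousLinearMap.comp_apply, hz]

/-- The Christoffel symbols `Γ^u_{ab}` vanish under the Killing hypotheses. -/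
lemma kChristoffel_u {m : ℕ} (H : KPt m → ℝ) (W : Fin m → KPt m → ℝ)
    (gT : ℝ → (Fin m → ℝ) → Matrix (Fin m) (Fin m) ℝ)
    (hH : ContDiff ℝ (⊤ : ℕ∞) H)
    (hgT : ∀ k l, ContDiff ℝ (⊤ : ℕ∞) (fun q : ℝ × (Fin m → ℝ) => gT q.1 q.2 k l))
    (hsym : ∀ u x, (gT u x).IsSymm) (hpos : ∀ u x, (gT u x).PosDef)
    (hHv : ∀ p : KPt m, kPDeriv (Sum.inl 0) H p = 0)
    (hWv : ∀ (k : Fin m) (p : KPt m), kPDeriv (Sum.inl 0) (W k) p = 0)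
    (a b : KIdx m) (p : KPt m) :
    kChristoffel H W gT (Sum.inl 1) a b p = 0 := by
  unfold kChristoffel
  rw [kInv_eq H W gT hsym hpos p]
  have hrow : ∀ c : KIdx m, kInv H W gT p (Sum.inl 1) c =
      if c = Sum.inl 0 then (1 : ℝ) else 0 := by
    intro c
    rcases c with j | l
    · fin_cases j <;> simp [kInv]
    · simp [kInv]
  have hsum : ∀ T : KIdx m → ℝ,
      (∑ c : KIdx m, kInv H W gT p (Sum.inl 1) c * T c) = T (Sum.inl 0) := by
    intro T
    simp only [hrow, ite_mul, one_mul, zero_mul]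
    simp [Finset.sum_ite_eq']
  rw [hsum]
  rw [kPDeriv_row_v H W gT a b p, kPDeriv_row_v H W gT b a p,
    kPDeriv_v_metric H W gT hH hgT hHv hWv a b p]
  ring

/-- If the null vector field `ℓ = ∂/∂v` of the Kundt metric is a Killing vector field, i.e.
`∂H/∂v = 0` and `∂W_i/∂v = 0` identically, then it is covariantly constant: `∇_a ℓ_b = 0`
for all `a, b`. Thus the most general metric admitting a covariantly constant null vector is
the Kundt metric with `H = H(u,x^k)` and `W_i = W_i(u,x^k)`. -/
theorem kundt_killing_implies_ccnv {m : ℕ} (hm : 2 ≤ m)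
    (H : KPt m → ℝ) (W : Fin m → KPt m → ℝ)
    (gT : ℝ → (Fin m → ℝ) → Matrix (Fin m) (Fin m) ℝ)
    (hH : ContDiff ℝ (⊤ : ℕ∞) H) (hW : ∀ k, ContDiff ℝ (⊤ : ℕ∞) (W k))
    (hgT : ∀ k l, ContDiff ℝ (⊤ : ℕ∞) (fun q : ℝ × (Fin m → ℝ) => gT q.1 q.2 k l))
    (hsym : ∀ u x, (gT u x).IsSymm) (hpos : ∀ u x, (gT u x).PosDef)
    (hHv : ∀ p : KPt m, kPDeriv (Sum.inl 0) H p = 0)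
    (hWv : ∀ (k : Fin m) (p : KPt m), kPDeriv (Sum.inl 0) (W k) p = 0) :
    ∀ (p : KPt m) (a b : KIdx m), kCovDl H W gT a b p = 0 := by
  intro p a b
  unfold kCovDl
  have h0 : kPDeriv a (fun _ => lFlat b) p = 0 := by simp [kPDeriv]
  rw [h0]
  simp only [lFlat, mul_ite, mul_one, mul_zero]
  rw [Finset.sum_ite_eq' Finset.univ (Sum.inl 1) (fun c => kChristoffel H W gT c a b p)]
  simp [kChristoffel_u H W gT hH hgT hsym hpos hHv hWv a b p]
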